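/- Let n ≥ 3, let K be a division ring with at least 3 elements, and let P be an n-dimensional affine space over K. For all lines a, b of P the following are equivalent: (i) there exist lines c, d, e such that a, c, d are pairwise distinct and concurrent; b, c, e are pairwise distinct and concurrent; d ∼ b; d ∼ e; and e ∼ a; (ii) a and b are coplanar (some plane contains both; a = b is allowed). -/

import Mathlib

/-- `a` is an affine line: a nonempty affine subspace whose direction has finrank 1. -/
def ALine (K : Type*) {V P : Type*} [DivisionRing K] [AddCommGroup V] [Module K V]
    [AddTorsor V P] (a : AffineSubspace K P) : Prop :=
  (a : Set P).Nonempty ∧ Module.finrank K a.direction = 1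

/-- `a` is an affine plane: a nonempty affine subspace whose direction has finrank 2. -/
def APlane (K : Type*) {V P : Type*} [DivisionRing K] [AddCommGroup V] [Module K V]
    [AddTorsor V P] (a : AffineSubspace K P) : Prop :=
  (a : Set P).Nonempty ∧ Module.finrank K a.direction = 2

/-- Two lines intersect: they are different and have a common point. -/
def AMeets {K V P : Type*} [DivisionRing K] [AddCommGroup V] [Module K V]
    [AddTorsor V P] (a b : AffineSubspace K P) : Prop :=
  a ≠ b ∧ ((a : Set P) ∩ (b : Set P)).Nonempty

/-- `x` meets the lines `y` and `z` in two distinct points. -/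
def AMeetsTwo {K V P : Type*} [DivisionRing K] [AddCommGroup V] [Module K V]
    [AddTorsor V P] (x y z : AffineSubspace K P) : Prop :=
  AMeets x y ∧ AMeets x z ∧ x ⊓ y ≠ x ⊓ z

/-- Three lines are pairwise distinct and concurrent. -/
def AS {K V P : Type*} [DivisionRing K] [AddCommGroup V] [Module K V]
    [AddTorsor V P] (a b c : AffineSubspace K P) : Prop :=
  a ≠ b ∧ a ≠ c ∧ b ≠ c ∧ ∃ p : P, p ∈ a ∧ p ∈ b ∧ p ∈ c

open Module AffineSubspace Submodule

section helpers
variable {K V P : Type*} [DivisionRing K] [AddCommGroup V] [Module K V] [AddTorsor V P]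

lemma ne_of_direction_ne {a b : AffineSubspace K P} (h : a.direction ≠ b.direction) : a ≠ b :=
  fun e => h (e ▸ rfl)

lemma aline_mk' (x : P) {v : V} (hv : v ≠ 0) : ALine K (AffineSubspace.mk' x (K ∙ v)) :=
  ⟨⟨x, AffineSubspace.self_mem_mk' _ _⟩, by
    rw [AffineSubspace.direction_mk']; exact finrank_span_singleton hv⟩

lemma span_ne_span {v w : V} (hv : v ∉ (K ∙ w)) : (K ∙ v) ≠ (K ∙ w) :=
  fun h => hv (h ▸ Submodule.mem_span_singleton_self v)

lemma not_mem_span_symm {u w : V} (hu : u ≠ 0) (hw : w ∉ (K ∙ u)) : u ∉ (K ∙ w) := by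
  intro h
  obtain ⟨c, hc⟩ := Submodule.mem_span_singleton.1 h
  have hc0 : c ≠ 0 := by rintro rfl; simp at hc; exact hu hc.symm
  exact hw (Submodule.mem_span_singleton.2
    ⟨c⁻¹, by rw [← hc, smul_smul, inv_mul_cancel₀ hc0, one_smul]⟩)

lemma indep_aux {u w : V} (hu : u ∉ (K ∙ w)) (hw : w ∉ (K ∙ u)) {α β : K}
    (h : α • u = β • w) : α = 0 ∧ β = 0 := by
  have hw0 : w ≠ 0 := fun h0 => hw (h0 ▸ Submodule.zero_mem _)
  have hα : α = 0 := by
    by_contra hα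
    exact hu (Submodule.mem_span_singleton.2
      ⟨α⁻¹ * β, by rw [mul_smul, ← h, smul_smul, inv_mul_cancel₀ hα, one_smul]⟩)
  refine ⟨hα, ?_⟩
  rw [hα, zero_smul] at h
  rcases smul_eq_zero.1 h.symm with h' | h'
  · exact h'
  · exact absurd h' hw0

lemma finrank_sup_two [FiniteDimensional K V] {D₁ D₂ : Submodule K V}
    (h1 : Module.finrank K D₁ = 1) (h2 : Module.finrank K D₂ = 1) (hne : D₁ ≠ D₂) :
    Module.finrank K ↥(D₁ ⊔ D₂) = 2 := by
  have key := Submodule.finrank_sup_add_finrank_inf_eq D₁ D₂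
  have hinf : Module.finrank K ↥(D₁ ⊓ D₂) = 0 := by
    by_contra h
    have hle1 : Module.finrank K ↥(D₁ ⊓ D₂) ≤ 1 := h1 ▸ Submodule.finrank_mono inf_le_left
    have heq : Module.finrank K ↥(D₁ ⊓ D₂) = 1 := le_antisymm hle1 (Nat.one_le_iff_ne_zero.2 h)
    have e1 : D₁ ⊓ D₂ = D₁ := Submodule.eq_of_le_of_finrank_eq inf_le_left (heq.trans h1.symm)
    have e2 : D₁ ⊓ D₂ = D₂ := Submodule.eq_of_le_of_finrank_eq inf_le_right (heq.trans h2.symm)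
    exact hne (e1 ▸ e2)
  omega

lemma exists_span_eq [FiniteDimensional K V] {a : AffineSubspace K P} (ha : ALine K a) :
    ∃ u : V, u ≠ 0 ∧ a.direction = K ∙ u := by
  have hnt : Nontrivial a.direction :=
    Module.finrank_pos_iff.1 (by rw [ha.2]; norm_num)
  obtain ⟨⟨u, hu⟩, hne⟩ := exists_ne (0 : a.direction)
  have hu0 : u ≠ 0 := fun h => hne (Subtype.ext h)
  refine ⟨u, hu0, ?_⟩
  refine (Submodule.eq_of_le_of_finrank_eq ((Submodule.span_singleton_le_iff_mem _ _).2 hu)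
    ?_).symm
  rw [finrank_span_singleton hu0, ha.2]

lemma le_mk'_of {a : AffineSubspace K P} {x : P} {D : Submodule K V}
    (hx : x ∈ a) (h : a.direction ≤ D) : a ≤ AffineSubspace.mk' x D := by
  intro y hy
  exact AffineSubspace.mem_mk'.2 (h (AffineSubspace.vsub_mem_direction hy hx))

lemma line_le_of_mem [FiniteDimensional K V] {a s : AffineSubspace K P} (ha : ALine K a)
    {x y : P} (hx : x ∈ a) (hy : y ∈ a) (hxy : x ≠ y) (hxs : x ∈ s) (hys : y ∈ s) : a ≤ s := by
  have hle : affineSpan K {x, y} ≤ a := affineSpan_le.2 (by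
    rintro z (rfl | rfl); exacts [hx, hy])
  have hdle : (affineSpan K ({x, y} : Set P)).direction ≤ a.direction :=
    AffineSubspace.direction_le hle
  have hdeq : (affineSpan K ({x, y} : Set P)).direction = a.direction := by
    refine Submodule.eq_of_le_of_finrank_eq hdle ?_
    rw [ha.2, direction_affineSpan, vectorSpan_pair_rev]
    exact finrank_span_singleton (vsub_ne_zero.2 (Ne.symm hxy))
  have heq : affineSpan K ({x, y} : Set P) = a :=
    AffineSubspace.ext_of_direction_eq hdeq
      ⟨x, left_mem_affineSpan_pair _ _ _, hx⟩
  rw [← heq]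
  exact affineSpan_le.2 (by rintro z (rfl | rfl); exacts [hxs, hys])

lemma line_eq_of_two [FiniteDimensional K V] {c e : AffineSubspace K P}
    (hc : ALine K c) (he : ALine K e) {x y : P} (hxy : x ≠ y)
    (hxc : x ∈ c) (hyc : y ∈ c) (hxe : x ∈ e) (hye : y ∈ e) : c = e :=
  le_antisymm (line_le_of_mem hc hxc hyc hxy hxe hye) (line_le_of_mem he hxe hye hxy hxc hyc)

lemma plane_of_lines_meet [FiniteDimensional K V] (hd2 : 1 < Module.finrank K V)
    {a b : AffineSubspace K P} (ha : ALine K a) (hb : ALine K b) {x : P}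
    (hxa : x ∈ a) (hxb : x ∈ b) :
    ∃ π : AffineSubspace K P, APlane K π ∧ a ≤ π ∧ b ≤ π := by
  by_cases hdir : a.direction = b.direction
  · have hne : a.direction ≠ ⊤ := by
      intro h
      have h1 := ha.2
      rw [h, finrank_top] at h1
      omega
    obtain ⟨w, hw⟩ : ∃ w : V, w ∉ a.direction := by
      by_contra h; push_neg at h; exact hne (Submodule.eq_top_iff'.2 h)
    have hw0 : w ≠ 0 := fun h => hw (h ▸ Submodule.zero_mem _)
    refine ⟨AffineSubspace.mk' x (a.direction ⊔ (K ∙ w)),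
      ⟨⟨x, self_mem_mk' _ _⟩, ?_⟩, le_mk'_of hxa le_sup_left,
      le_mk'_of hxb (hdir ▸ le_sup_left)⟩
    rw [direction_mk']
    exact finrank_sup_two ha.2 (finrank_span_singleton hw0)
      (fun h => hw (h.symm ▸ Submodule.mem_span_singleton_self w))
  · refine ⟨AffineSubspace.mk' x (a.direction ⊔ b.direction),
      ⟨⟨x, self_mem_mk' _ _⟩, ?_⟩, le_mk'_of hxa le_sup_left, le_mk'_of hxb le_sup_right⟩
    rw [direction_mk']
    exact finrank_sup_two ha.2 hb.2 hdir

end helpers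

theorem statement17 {K V P : Type*} [DivisionRing K] [AddCommGroup V] [Module K V]
    [AddTorsor V P] {n : ℕ} (hn : 3 ≤ n)
    (hK : (3 : Cardinal) ≤ Cardinal.mk K)
    (hdim : Module.finrank K V = n)
    (a b : AffineSubspace K P) (ha : ALine K a) (hb : ALine K b) :
    (∃ c d e : AffineSubspace K P, ALine K c ∧ ALine K d ∧ ALine K e ∧
      AS a c d ∧ AS b c e ∧ AMeets d b ∧ AMeets d e ∧ AMeets e a) ↔
    (∃ π : AffineSubspace K P, APlane K π ∧ a ≤ π ∧ b ≤ π) := by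
  haveI : FiniteDimensional K V := FiniteDimensional.of_finrank_pos (by omega)
  have hd1 : 1 < Module.finrank K V := by omega
  constructor
  · rintro ⟨c, d, e, hc, hd, he, ⟨hac, had, hcd, p, hpa, hpc, hpd⟩,
      ⟨hbc, hbe, hce, q, hqb, hqc, hqe⟩, hdb, hde, hea⟩
    by_cases hq : q ∈ a
    · exact plane_of_lines_meet hd1 ha hb hq hqb
    · have hpq : p ≠ q := fun h => hq (h ▸ hpa)
      have hm : q -ᵥ p ∉ a.direction := fun h =>
        hq ((AffineSubspace.vsub_right_mem_direction_iff_mem hpa q).1 h)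
      have hm0 : q -ᵥ p ≠ 0 := vsub_ne_zero.2 hpq.symm
      set D := a.direction ⊔ (K ∙ (q -ᵥ p)) with hD
      set π := AffineSubspace.mk' p D with hπdef
      have hπplane : APlane K π := by
        refine ⟨⟨p, self_mem_mk' _ _⟩, ?_⟩
        rw [hπdef, direction_mk']
        exact finrank_sup_two ha.2 (finrank_span_singleton hm0)
          (fun h => hm (h.symm ▸ Submodule.mem_span_singleton_self _))
      have haπ : a ≤ π := le_mk'_of hpa le_sup_left
      have hqπ : q ∈ π :=
        AffineSubspace.mem_mk'.2 (Submodule.mem_sup_right (Submodule.mem_span_singleton_self _))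
      have hpπ : p ∈ π := self_mem_mk' _ _
      obtain ⟨hea_ne, r, hre, hra⟩ := hea
      have hrq : r ≠ q := fun h => hq (h ▸ hra)
      have heπ : e ≤ π := line_le_of_mem he hqe hre hrq.symm hqπ (haπ hra)
      obtain ⟨hde_ne, z, hzd, hze⟩ := hde
      have hzp : z ≠ p := by
        rintro rfl
        exact hce (line_eq_of_two hc he hpq hpc hqc hze hqe)
      have hdπ : d ≤ π := line_le_of_mem hd hpd hzd hzp.symm hpπ (heπ hze)
      obtain ⟨hdb_ne, t, htd, htb⟩ := hdb
      have htq : t ≠ q := by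
        rintro rfl
        exact hcd (line_eq_of_two hc hd hpq hpc hqc hpd htd)
      have hbπ : b ≤ π := line_le_of_mem hb hqb htb htq.symm hqπ (hdπ htd)
      exact ⟨π, hπplane, haπ, hbπ⟩
  · rintro ⟨π, hπ, haπ, hbπ⟩
    obtain ⟨u, hu0, hua⟩ := exists_span_eq ha
    obtain ⟨v, hv0, hvb⟩ := exists_span_eq hb
    by_cases hint : ∃ x, x ∈ a ∧ x ∈ b
    · obtain ⟨x, hxa, hxb⟩ := hint
      have hsupne : (K ∙ u) ⊔ (K ∙ v) ≠ ⊤ := by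
        intro h
        have h1 : Module.finrank K ↥((K ∙ u) ⊔ (K ∙ v)) ≤ 2 := by
          have h2 := Submodule.finrank_add_le_finrank_add_finrank (K ∙ u) (K ∙ v)
          rwa [finrank_span_singleton hu0, finrank_span_singleton hv0] at h2
        rw [h, finrank_top, hdim] at h1
        omega
      obtain ⟨w, hw⟩ : ∃ w : V, w ∉ (K ∙ u) ⊔ (K ∙ v) := by
        by_contra h; push_neg at h; exact hsupne (Submodule.eq_top_iff'.2 h)
      have hwu : w ∉ (K ∙ u) := fun h => hw (Submodule.mem_sup_left h)
      have hwv : w ∉ (K ∙ v) := fun h => hw (Submodule.mem_sup_right h)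
      have hw0 : w ≠ 0 := fun h => hwu (h ▸ Submodule.zero_mem _)
      have huS : u ∈ (K ∙ u) ⊔ (K ∙ v) :=
        Submodule.mem_sup_left (Submodule.mem_span_singleton_self u)
      have huw : u ∉ (K ∙ w) := not_mem_span_symm hu0 hwu
      obtain ⟨t, ht0, ht1⟩ := Cardinal.three_le hK 0 1
      -- basic non-membership facts
      have F1 : u + w ∉ (K ∙ u) := by
        intro h
        have h2 := Submodule.sub_mem _ h (Submodule.mem_span_singleton_self u)
        rw [add_sub_cancel_left] at h2
        exact hwu h2
      have F2 : u + t • w ∉ (K ∙ u) := by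
        intro h
        have h2 := Submodule.sub_mem _ h (Submodule.mem_span_singleton_self u)
        rw [add_sub_cancel_left] at h2
        exact hwu (by
          have h3 := Submodule.smul_mem _ t⁻¹ h2
          rwa [smul_smul, inv_mul_cancel₀ ht0, one_smul] at h3)
      have F3 : u + w ∉ (K ∙ v) := by
        intro h
        have h2 := Submodule.sub_mem _ (Submodule.mem_sup_right h : u + w ∈ _) huS
        rw [add_sub_cancel_left] at h2
        exact hw h2
      have F4 : u + t • w ∉ (K ∙ v) := by
        intro h
        have h2 := Submodule.sub_mem _ (Submodule.mem_sup_right h : u + t • w ∈ _) huS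
        rw [add_sub_cancel_left] at h2
        have h3 := Submodule.smul_mem _ t⁻¹ h2
        rw [smul_smul, inv_mul_cancel₀ ht0, one_smul] at h3
        exact hw h3
      have F5 : u + w ∉ (K ∙ w) := by
        intro h
        obtain ⟨cc, hcc⟩ := Submodule.mem_span_singleton.1 h
        exact huw (Submodule.mem_span_singleton.2
          ⟨cc - 1, by rw [sub_smul, hcc, one_smul, add_sub_cancel_right]⟩)
      have F6 : u + t • w ∉ (K ∙ w) := by
        intro h
        obtain ⟨cc, hcc⟩ := Submodule.mem_span_singleton.1 h
        exact huw (Submodule.mem_span_singleton.2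
          ⟨cc - t, by rw [sub_smul, hcc, add_sub_cancel_right]⟩)
      have Fnz1 : u + w ≠ 0 := fun h => F1 (h ▸ Submodule.zero_mem _)
      have Fnz2 : u + t • w ≠ 0 := fun h => F2 (h ▸ Submodule.zero_mem _)
      have F7 : u + w ∉ (K ∙ (u + t • w)) := by
        intro h
        obtain ⟨cc, hcc⟩ := Submodule.mem_span_singleton.1 h
        have hkey : (cc - 1) • u = (1 - cc * t) • w := by
          rw [smul_add, smul_smul] at hcc
          rw [sub_smul, sub_smul, one_smul, one_smul]
          have := hcc
          abel_nf
          abel_nf at this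
          linear_combination (norm := abel) this
        obtain ⟨h8, h9⟩ := indep_aux huw hwu hkey
        have hcc1 : cc = 1 := sub_eq_zero.1 h8
        rw [hcc1, one_mul] at h9
        exact ht1 (sub_eq_zero.1 h9).symm
      -- the three lines through x
      refine ⟨AffineSubspace.mk' x (K ∙ w), AffineSubspace.mk' x (K ∙ (u + w)),
        AffineSubspace.mk' x (K ∙ (u + t • w)),
        aline_mk' x hw0, aline_mk' x Fnz1, aline_mk' x Fnz2, ?_, ?_, ?_, ?_, ?_⟩
      · refine ⟨?_, ?_, ?_, x, hxa, self_mem_mk' _ _, self_mem_mk' _ _⟩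
        · exact ne_of_direction_ne (by rw [hua, direction_mk']; exact span_ne_span huw)
        · exact ne_of_direction_ne (by
            rw [hua, direction_mk']; exact (span_ne_span F1).symm)
        · exact ne_of_direction_ne (by
            rw [direction_mk', direction_mk']; exact (span_ne_span F5).symm)
      · refine ⟨?_, ?_, ?_, x, hxb, self_mem_mk' _ _, self_mem_mk' _ _⟩
        · exact ne_of_direction_ne (by
            rw [hvb, direction_mk']; exact (span_ne_span hwv).symm)
        · exact ne_of_direction_ne (by
            rw [hvb, direction_mk']; exact (span_ne_span F4).symm)
        · exact ne_of_direction_ne (by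
            rw [direction_mk', direction_mk']; exact (span_ne_span F6).symm)
      · exact ⟨ne_of_direction_ne (by
            rw [hvb, direction_mk']; exact span_ne_span F3),
          ⟨x, self_mem_mk' _ _, hxb⟩⟩
      · exact ⟨ne_of_direction_ne (by
            rw [direction_mk', direction_mk']; exact span_ne_span F7),
          ⟨x, self_mem_mk' _ _, self_mem_mk' _ _⟩⟩
      · exact ⟨ne_of_direction_ne (by
            rw [hua, direction_mk']; exact span_ne_span F2),
          ⟨x, self_mem_mk' _ _, hxa⟩⟩
    · push_neg at hint
      obtain ⟨p, hpa⟩ := ha.1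
      obtain ⟨q, hqb⟩ := hb.1
      have hqa : q ∉ a := fun h => hint q h hqb
      have hdirab : a.direction = b.direction := by
        by_contra hne
        have hsup : a.direction ⊔ b.direction = π.direction := by
          refine Submodule.eq_of_le_of_finrank_eq
            (sup_le (AffineSubspace.direction_le haπ) (AffineSubspace.direction_le hbπ)) ?_
          rw [finrank_sup_two ha.2 hb.2 hne, hπ.2]
        have hqp : q -ᵥ p ∈ a.direction ⊔ b.direction := by
          rw [hsup]
          exact AffineSubspace.vsub_mem_direction (hbπ hqb) (haπ hpa)
        obtain ⟨y, hy, z, hz, hyz⟩ := Submodule.mem_sup.1 hqp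
        have h1 : y +ᵥ p ∈ a := AffineSubspace.vadd_mem_of_mem_direction hy hpa
        have h2 : y +ᵥ p ∈ b := by
          have hpt : y +ᵥ p = (-z) +ᵥ q := by
            rw [eq_comm, eq_vadd_iff_vsub_eq]
            rw [vadd_vsub_assoc, ← hyz]
            abel
          rw [hpt]
          exact AffineSubspace.vadd_mem_of_mem_direction (Submodule.neg_mem _ hz) hqb
        exact hint _ h1 h2
      have hub : b.direction = K ∙ u := hdirab ▸ hua
      set m := q -ᵥ p with hmdef
      have hm0 : m ≠ 0 := vsub_ne_zero.2 (fun h => hqa (h ▸ hpa))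
      have hmu : m ∉ (K ∙ u) := fun h =>
        hqa ((AffineSubspace.vsub_right_mem_direction_iff_mem hpa q).1 (by rw [hua]; exact h))
      have hum : u ∉ (K ∙ m) := not_mem_span_symm hu0 hmu
      obtain ⟨s, hs0, hsm1⟩ := Cardinal.three_le hK 0 (-1)
      have hs1 : s + 1 ≠ 0 := fun h => hsm1 (eq_neg_of_add_eq_zero_left h)
      have G1 : m + u ∉ (K ∙ u) := by
        intro h
        have h2 := Submodule.sub_mem _ h (Submodule.mem_span_singleton_self u)
        rw [add_sub_cancel_right] at h2
        exact hmu h2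
      have G2 : m + u ∉ (K ∙ m) := by
        intro h
        have h2 := Submodule.sub_mem _ h (Submodule.mem_span_singleton_self m)
        rw [add_sub_cancel_left] at h2
        exact hum h2
      have G3 : s • u - m ∉ (K ∙ u) := by
        intro h
        have h2 := Submodule.sub_mem _ (Submodule.smul_mem _ s
          (Submodule.mem_span_singleton_self u)) h
        rw [sub_sub_cancel] at h2
        exact hmu h2
      have G4 : s • u - m ∉ (K ∙ m) := by
        intro h
        obtain ⟨cc, hcc⟩ := Submodule.mem_span_singleton.1 h
        have hkey : s • u = (cc + 1) • m := by
          rw [add_smul, one_smul, hcc]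
          abel
        exact hs0 (indep_aux hum hmu hkey).1
      have G5 : s • u - m ∉ (K ∙ (m + u)) := by
        intro h
        obtain ⟨cc, hcc⟩ := Submodule.mem_span_singleton.1 h
        have hkey : (cc + 1) • m = (s - cc) • u := by
          rw [smul_add] at hcc
          rw [eq_sub_iff_add_eq] at hcc
          rw [add_smul, one_smul, sub_smul, eq_sub_iff_add_eq, ← hcc]
          abel
        obtain ⟨h8, h9⟩ := indep_aux hmu hum hkey
        have hcc1 : cc = -1 := eq_neg_of_add_eq_zero_left h8
        rw [hcc1] at h9
        exact hsm1 (sub_eq_zero.1 h9)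
      have Gnz1 : m + u ≠ 0 := fun h => G1 (h ▸ Submodule.zero_mem _)
      have Gnz2 : s • u - m ≠ 0 := fun h => G3 (h ▸ Submodule.zero_mem _)
      set γ := (s + 1)⁻¹ with hγdef
      have hγs : γ * s = 1 - γ := by
        have h1 : γ * (s + 1) = 1 := inv_mul_cancel₀ hs1
        rw [mul_add, mul_one] at h1
        exact eq_sub_of_add_eq h1
      refine ⟨AffineSubspace.mk' p (K ∙ m), AffineSubspace.mk' p (K ∙ (m + u)),
        AffineSubspace.mk' q (K ∙ (s • u - m)),
        aline_mk' p hm0, aline_mk' p Gnz1, aline_mk' q Gnz2, ?_, ?_, ?_, ?_, ?_⟩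
      · refine ⟨?_, ?_, ?_, p, hpa, self_mem_mk' _ _, self_mem_mk' _ _⟩
        · exact ne_of_direction_ne (by rw [hua, direction_mk']; exact span_ne_span hum)
        · exact ne_of_direction_ne (by
            rw [hua, direction_mk']; exact (span_ne_span G1).symm)
        · exact ne_of_direction_ne (by
            rw [direction_mk', direction_mk']; exact (span_ne_span G2).symm)
      · refine ⟨?_, ?_, ?_, q, hqb, ?_, self_mem_mk' _ _⟩
        · exact ne_of_direction_ne (by rw [hub, direction_mk']; exact span_ne_span hum)
        · exact ne_of_direction_ne (by
            rw [hub, direction_mk']; exact (span_ne_span G3).symm)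
        · exact ne_of_direction_ne (by
            rw [direction_mk', direction_mk']; exact (span_ne_span G4).symm)
        · exact AffineSubspace.mem_mk'.2 (Submodule.mem_span_singleton_self m)
      · refine ⟨ne_of_direction_ne (by
            rw [hub, direction_mk']; exact span_ne_span G1), ⟨u +ᵥ q, ?_, ?_⟩⟩
        · refine AffineSubspace.mem_mk'.2 ?_
          rw [vadd_vsub_assoc, ← hmdef, add_comm]
          exact Submodule.mem_span_singleton_self _
        · exact AffineSubspace.vadd_mem_of_mem_direction
            (by rw [hub]; exact Submodule.mem_span_singleton_self u) hqb
      · refine ⟨ne_of_direction_ne (by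
            rw [direction_mk', direction_mk']; exact (span_ne_span G5).symm),
          ⟨γ • (s • u - m) +ᵥ q, ?_, ?_⟩⟩
        · refine AffineSubspace.mem_mk'.2 ?_
          rw [vadd_vsub_assoc, ← hmdef]
          refine Submodule.mem_span_singleton.2 ⟨1 - γ, ?_⟩
          rw [smul_add, smul_sub, smul_smul, hγs, sub_smul, sub_smul, one_smul, one_smul]
          abel
        · exact AffineSubspace.vadd_mem_mk' q
            (Submodule.smul_mem _ γ (Submodule.mem_span_singleton_self _))
      · refine ⟨ne_of_direction_ne (by
            rw [hua, direction_mk']; exact span_ne_span G3), ⟨s • u +ᵥ p, ?_, ?_⟩⟩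
        · refine AffineSubspace.mem_mk'.2 ?_
          rw [vadd_vsub_assoc, ← neg_vsub_eq_vsub_rev, ← hmdef, ← sub_eq_add_neg]
          exact Submodule.mem_span_singleton_self _
        · exact AffineSubspace.vadd_mem_of_mem_direction
            (by rw [hua]; exact Submodule.smul_mem _ s (Submodule.mem_span_singleton_self u)) hpa
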